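/- arXiv:math/0511470 — 2 statements merged into one kernel-verified Lean document; each statement's English description precedes it below -/
import Mathlib

section
/- Suppose F_{n⃗} is an |n⃗|-dimensional subspace of L²(ℝ), |n⃗| = |m⃗| + 1, and fix k ∈ {1,…,p} with nₖ ≥ 1. Then every nonzero linear form Q = Σⱼ Aⱼ w₁ⱼ ∈ F_{n⃗} ∩ G_{m⃗}⊥ has Aₖ of exact degree nₖ − 1 if and only if F_{n⃗−e⃗ₖ} ∩ G_{m⃗}⊥ = {0}. -/
open MeasureTheory Polynomial

/-- The space F_{n⃗}: the span in functions on ℝ of xʲ·w₁ₗ(x), 0 ≤ j ≤ nₗ−1. -/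
noncomputable def mixedF {p : ℕ} (w1 : Fin p → ℝ → ℝ) (n : Fin p → ℕ) :
    Submodule ℝ (ℝ → ℝ) :=
  Submodule.span ℝ {f | ∃ l : Fin p, ∃ j : ℕ, j < n l ∧ f = fun x => x ^ j * w1 l x}

/-- The "orthogonal complement of G_{m⃗}": functions Q such that Q·xʲ·w₂ₖ is
integrable with vanishing integral for 0 ≤ j ≤ mₖ−1, k = 1,…,q. -/
noncomputable def mixedGperp {q : ℕ} (w2 : Fin q → ℝ → ℝ) (m : Fin q → ℕ) :
    Submodule ℝ (ℝ → ℝ) where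
  carrier := {Q | ∀ k : Fin q, ∀ j, j < m k →
    Integrable (fun x => Q x * (x ^ j * w2 k x)) ∧
      (∫ x, Q x * (x ^ j * w2 k x)) = 0}
  zero_mem' := by
    intro k j hj
    constructor
    · simpa using (integrable_zero ℝ ℝ (volume : Measure ℝ))
    · simp
  add_mem' := by
    intro a b ha hb k j hj
    obtain ⟨hai, haz⟩ := ha k j hj
    obtain ⟨hbi, hbz⟩ := hb k j hj
    constructor
    · simpa [Pi.add_apply, add_mul] using (hai.add hbi : Integrable (fun x => a x * (x ^ j * w2 k x) + b x * (x ^ j * w2 k x)))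
    · have h : (fun x => (a + b) x * (x ^ j * w2 k x)) =
        fun x => a x * (x ^ j * w2 k x) + b x * (x ^ j * w2 k x) := by
        funext x; simp [add_mul]
      rw [h, integral_add hai hbi, haz, hbz, add_zero]
  smul_mem' := by
    intro c a ha k j hj
    obtain ⟨hai, haz⟩ := ha k j hj
    have h : (fun x => (c • a) x * (x ^ j * w2 k x)) =
        fun x => c * (a x * (x ^ j * w2 k x)) := by
      funext x; simp [mul_assoc]
    constructor
    · rw [h]; exact hai.const_mul c
    · rw [h, integral_const_mul, haz, mul_zero]

/-- Q is a linear form of multiple orthogonal polynomials of mixed type for the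
pair (n⃗, m⃗). -/
noncomputable def IsMixedForm {p q : ℕ} (w1 : Fin p → ℝ → ℝ) (w2 : Fin q → ℝ → ℝ)
    (n : Fin p → ℕ) (m : Fin q → ℕ) (Q : ℝ → ℝ) : Prop :=
  (∃ A : Fin p → Polynomial ℝ, (∀ i, (A i).degree < (n i : ℕ)) ∧
     Q = fun x => ∑ i, (A i).eval x * w1 i x) ∧
  ∀ k : Fin q, ∀ j, j < m k → (∫ x, Q x * (x ^ j * w2 k x)) = 0


lemma evalSumRange {A : Polynomial ℝ} {ν : ℕ} (h : A.degree < (ν : ℕ)) (x : ℝ) :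
    A.eval x = ∑ j ∈ Finset.range ν, A.coeff j * x ^ j := by
  by_cases hA : A = 0
  · simp [hA]
  · exact Polynomial.eval_eq_sum_range' ((Polynomial.natDegree_lt_iff_degree_lt hA).2 h) x

lemma mixedF_mem_iff {p : ℕ} (w1 : Fin p → ℝ → ℝ) (ν : Fin p → ℕ) (f : ℝ → ℝ) :
    f ∈ mixedF w1 ν ↔ ∃ A : Fin p → Polynomial ℝ, (∀ i, (A i).degree < (ν i : ℕ)) ∧
      f = fun x => ∑ i, (A i).eval x * w1 i x := by
  constructor
  · intro hf
    induction hf using Submodule.span_induction with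
    | mem g hg =>
      obtain ⟨l, j, hj, rfl⟩ := hg
      refine ⟨fun i => if i = l then (Polynomial.X : ℝ[X]) ^ j else 0, fun i => ?_, ?_⟩
      · by_cases h : i = l
        · simpa [h, Polynomial.degree_X_pow] using (by exact_mod_cast hj : (j : WithBot ℕ) < (ν l : ℕ))
        · simp only [h, if_false]
          exact (Polynomial.degree_zero (R := ℝ)) ▸ WithBot.bot_lt_coe (ν i)
      · funext x
        rw [Finset.sum_eq_single l]
        · simp
        · intro b _ hb; simp [hb]
        · simp
    | zero => exact ⟨0, fun i => (Polynomial.degree_zero (R := ℝ)) ▸ WithBot.bot_lt_coe (ν i), by funext x; simp⟩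
    | add a b _ _ iha ihb =>
      obtain ⟨A, hA, rfl⟩ := iha
      obtain ⟨B, hB, rfl⟩ := ihb
      refine ⟨A + B, fun i => ?_, ?_⟩
      · exact lt_of_le_of_lt (Polynomial.degree_add_le _ _) (max_lt (hA i) (hB i))
      · funext x; simp [Finset.sum_add_distrib, add_mul]
    | smul c a _ iha =>
      obtain ⟨A, hA, rfl⟩ := iha
      refine ⟨c • A, fun i => ?_, ?_⟩
      · exact lt_of_le_of_lt (Polynomial.degree_smul_le _ _) (hA i)
      · funext x; simp [Finset.mul_sum, mul_assoc]
  · rintro ⟨A, hA, rfl⟩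
    have : (fun x => ∑ i, (A i).eval x * w1 i x) =
        ∑ i : Fin p, ∑ j ∈ Finset.range (ν i), (A i).coeff j • (fun x => x ^ j * w1 i x) := by
      funext x
      simp only [Finset.sum_apply, Pi.smul_apply, smul_eq_mul]
      refine Finset.sum_congr rfl fun i _ => ?_
      rw [evalSumRange (hA i) x, Finset.sum_mul]
      exact Finset.sum_congr rfl fun j _ => by ring
    rw [this]
    refine Submodule.sum_mem _ fun i _ => Submodule.sum_mem _ fun j hj => ?_
    exact Submodule.smul_mem _ _ (Submodule.subset_span ⟨i, j, Finset.mem_range.1 hj, rfl⟩)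

lemma repr_unique {p : ℕ} {w1 : Fin p → ℝ → ℝ} {n : Fin p → ℕ}
    (hdim : Module.finrank ℝ (mixedF w1 n) = ∑ i, n i)
    (A : Fin p → Polynomial ℝ) (hA : ∀ i, (A i).degree < (n i : ℕ))
    (h0 : (fun x => ∑ i, (A i).eval x * w1 i x) = 0) : ∀ i, A i = 0 := by
  set g : (Σ l : Fin p, Fin (n l)) → (ℝ → ℝ) := fun s => fun x => x ^ (s.2 : ℕ) * w1 s.1 x with hg
  have hrange : Set.range g = {f | ∃ l : Fin p, ∃ j : ℕ, j < n l ∧ f = fun x => x ^ j * w1 l x} := by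
    ext f; constructor
    · rintro ⟨⟨l, j⟩, rfl⟩; exact ⟨l, j, j.2, rfl⟩
    · rintro ⟨l, j, hj, rfl⟩; exact ⟨⟨l, ⟨j, hj⟩⟩, rfl⟩
  have hli : LinearIndependent ℝ g := by
    rw [linearIndependent_iff_card_eq_finrank_span, Set.finrank, hrange]
    show _ = Module.finrank ℝ (mixedF w1 n)
    rw [hdim, Fintype.card_sigma]
    simp
  have hsum : ∑ s : (Σ l : Fin p, Fin (n l)), ((A s.1).coeff (s.2 : ℕ)) • g s = 0 := by
    rw [← h0]
    funext x
    simp only [Finset.sum_apply, Pi.smul_apply, smul_eq_mul, hg]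
    rw [← Finset.univ_sigma_univ, Finset.sum_sigma]
    refine Finset.sum_congr rfl fun i _ => ?_
    rw [evalSumRange (hA i) x, Finset.sum_mul, Finset.sum_range fun j => (A i).coeff j * x ^ j * w1 i x]
    exact Finset.sum_congr rfl fun j _ => by ring
  have hz := Fintype.linearIndependent_iff.1 hli _ hsum
  intro i
  ext j
  by_cases hj : j < n i
  · simpa using hz ⟨i, ⟨j, hj⟩⟩
  · simp only [Polynomial.coeff_zero]
    exact Polynomial.coeff_eq_zero_of_degree_lt
      (lt_of_lt_of_le (hA i) (by exact_mod_cast Nat.le_of_not_lt hj))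

/-- Lemma 2.2(d): every nonzero linear form Q = Σⱼ Aⱼ w₁ⱼ ∈ F_{n⃗} ∩ G_{m⃗}⊥ has
Aₖ of exact degree nₖ − 1 iff F_{n⃗−e⃗ₖ} ∩ G_{m⃗}⊥ = {0}. -/
theorem stmt11 (p q : ℕ) (w1 : Fin p → ℝ → ℝ) (w2 : Fin q → ℝ → ℝ)
    (n : Fin p → ℕ) (m : Fin q → ℕ) (k : Fin p) (hnk : 1 ≤ n k)
    (hInt : ∀ (l : Fin p) (j : ℕ), j < n l → ∀ (k' : Fin q) (i : ℕ), i < m k' →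
      Integrable (fun x : ℝ => (x ^ j * w1 l x) * (x ^ i * w2 k' x)))
    (hdim : Module.finrank ℝ (mixedF w1 n) = ∑ i, n i)
    (hnm : ∑ i, n i = ∑ k', m k' + 1) :
    (∀ A : Fin p → Polynomial ℝ, (∀ i, (A i).degree < (n i : ℕ)) →
      (fun x => ∑ i, (A i).eval x * w1 i x) ∈ mixedGperp w2 m →
      (¬ ∀ i, A i = 0) →
      (A k).degree = ((n k - 1 : ℕ) : WithBot ℕ)) ↔
    mixedF w1 (Function.update n k (n k - 1)) ⊓ mixedGperp w2 m = ⊥ := by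
  constructor
  · intro hA
    rw [eq_bot_iff]
    intro Q hQ
    obtain ⟨hQF, hQG⟩ := Submodule.mem_inf.1 hQ
    obtain ⟨A, hAb, rfl⟩ := (mixedF_mem_iff w1 _ Q).1 hQF
    rw [Submodule.mem_bot]
    by_cases hz : ∀ i, A i = 0
    · funext x; simp [hz]
    · exfalso
      have hAn : ∀ i, (A i).degree < (n i : ℕ) := by
        intro i
        refine lt_of_lt_of_le (hAb i) ?_
        by_cases h : i = k
        · rw [h, Function.update_self]
          exact_mod_cast Nat.sub_le (n k) 1
        · simp [Function.update_of_ne h]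
      have hdeg := hA A hAn hQG hz
      have : (A k).degree < ((n k - 1 : ℕ) : WithBot ℕ) := by
        simpa using hAb k
      rw [hdeg] at this
      exact lt_irrefl _ this
  · intro hbot A hdeg hG hne
    by_contra hne2
    have hklt : (A k).degree < ((n k - 1 : ℕ) : WithBot ℕ) := by
      by_cases hz : A k = 0
      · rw [hz, Polynomial.degree_zero]; exact WithBot.bot_lt_coe _
      · rw [Polynomial.degree_eq_natDegree hz] at hne2 ⊢
        have h1 : (A k).natDegree < n k := (Polynomial.natDegree_lt_iff_degree_lt hz).2 (hdeg k)
        have h2 : (A k).natDegree ≠ n k - 1 := by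
          intro h; exact hne2 (by rw [h])
        exact_mod_cast Nat.lt_of_le_of_ne (Nat.le_sub_one_of_lt h1) h2
    have hmem : (fun x => ∑ i, (A i).eval x * w1 i x) ∈
        mixedF w1 (Function.update n k (n k - 1)) := by
      rw [mixedF_mem_iff]
      refine ⟨A, fun i => ?_, rfl⟩
      by_cases h : i = k
      · subst h; simpa using hklt
      · simpa [Function.update_of_ne h] using hdeg i
    have h0 : (fun x => ∑ i, (A i).eval x * w1 i x) = 0 := by
      have := hbot ▸ Submodule.mem_inf.2 ⟨hmem, hG⟩
      simpa using this
    exact hne (repr_unique hdim A hdeg h0)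
end

section
/- Suppose |n⃗| = |m⃗|, F_{n⃗} is an |n⃗|-dimensional subspace of L²(ℝ), and F_{n⃗} ∩ G_{m⃗}⊥ = {0}. Then for every k = 1,…,q, the pair (n⃗, m⃗ − e⃗ₖ) is a normal pair of multi-indices: the space F_{n⃗} ∩ G_{m⃗−e⃗ₖ}⊥ is one-dimensional, and every nonzero Q in it satisfies ∫ Q(x) x^{mₖ−1} w₂ₖ(x) dx ≠ 0. -/
open MeasureTheory Polynomial

/-- Corollary 2.3(a): if |n⃗| = |m⃗|, F_{n⃗} is |n⃗|-dimensional and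
F_{n⃗} ∩ G_{m⃗}⊥ = {0}, then for each k the pair (n⃗, m⃗ − e⃗ₖ) is normal:
F_{n⃗} ∩ G_{m⃗−e⃗ₖ}⊥ is one-dimensional and every nonzero Q in it satisfies
∫ Q(x) x^{mₖ−1} w₂ₖ(x) dx ≠ 0 (type I normalization is possible). -/
theorem stmt12 (p q : ℕ) (w1 : Fin p → ℝ → ℝ) (w2 : Fin q → ℝ → ℝ)
    (n : Fin p → ℕ) (m : Fin q → ℕ) (k : Fin q) (hmk : 1 ≤ m k)
    (hInt : ∀ (l : Fin p) (j : ℕ), j < n l → ∀ (k' : Fin q) (i : ℕ), i < m k' →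
      Integrable (fun x : ℝ => (x ^ j * w1 l x) * (x ^ i * w2 k' x)))
    (hdim : Module.finrank ℝ (mixedF w1 n) = ∑ i, n i)
    (hnm : ∑ i, n i = ∑ k', m k')
    (hbot : mixedF w1 n ⊓ mixedGperp w2 m = ⊥) :
    Module.finrank ℝ
      (mixedF w1 n ⊓ mixedGperp w2 (Function.update m k (m k - 1)) :
        Submodule ℝ (ℝ → ℝ)) = 1 ∧
    ∀ Q ∈ mixedF w1 n ⊓ mixedGperp w2 (Function.update m k (m k - 1)), Q ≠ 0 →
      (∫ x, Q x * (x ^ (m k - 1) * w2 k x)) ≠ 0 := by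
  classical
  set m' : Fin q → ℕ := Function.update m k (m k - 1) with hm'def
  have hm'le : ∀ k', m' k' ≤ m k' := by
    intro k'
    by_cases h : k' = k
    · subst h; simp only [m', Function.update_self]; omega
    · simp [m', Function.update_of_ne h]
  -- integrability for all members of F
  have hIntF : ∀ Q ∈ mixedF w1 n, ∀ (k' : Fin q) (i : ℕ), i < m k' →
      Integrable (fun x : ℝ => Q x * (x ^ i * w2 k' x)) := by
    intro Q hQ
    induction hQ using Submodule.span_induction with
    | mem f hf =>
        obtain ⟨l, j, hj, rfl⟩ := hf
        intro k' i hi; exact hInt l j hj k' i hi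
    | zero => intro k' i hi; simpa using (integrable_zero ℝ ℝ (volume : Measure ℝ))
    | add f g hf hg ihf ihg =>
        intro k' i hi
        have h := (ihf k' i hi).add (ihg k' i hi)
        simpa [Pi.add_apply, add_mul] using (h : Integrable (fun x => f x * (x ^ i * w2 k' x) + g x * (x ^ i * w2 k' x)))
    | smul c f hf ihf =>
        intro k' i hi
        have h := (ihf k' i hi).const_mul c
        simpa [Pi.smul_apply, smul_eq_mul, mul_assoc] using h
  have hmk1 : m k - 1 < m k := by omega
  -- uniqueness key
  have hkey : ∀ Q ∈ mixedF w1 n ⊓ mixedGperp w2 m',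
      (∫ x, Q x * (x ^ (m k - 1) * w2 k x)) = 0 → Q = 0 := by
    intro Q hQ hz
    have hQF := hQ.1
    have hQG := hQ.2
    have hGm : Q ∈ mixedGperp w2 m := by
      intro k' j hj
      refine ⟨hIntF Q hQF k' j hj, ?_⟩
      by_cases h : k' = k ∧ j = m k - 1
      · obtain ⟨h1, h2⟩ := h; subst h1; subst h2; exact hz
      · have hj' : j < m' k' := by
          by_cases hk : k' = k
          · subst hk
            simp only [m', Function.update_self]
            push_neg at h
            have := h rfl
            omega
          · simpa [m', Function.update_of_ne hk] using hj
        exact (hQG k' j hj').2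
    have hQbot : Q ∈ mixedF w1 n ⊓ mixedGperp w2 m := ⟨hQF, hGm⟩
    rw [hbot] at hQbot
    simpa using hQbot
  -- dimension facts
  have hpos : 0 < ∑ k', m k' :=
    lt_of_lt_of_le hmk (Finset.single_le_sum (fun i _ => Nat.zero_le (m i)) (Finset.mem_univ k))
  haveI : FiniteDimensional ℝ (mixedF w1 n) := by
    apply FiniteDimensional.of_finrank_pos
    rw [hdim, hnm]; exact hpos
  have hsum' : ∑ k', m' k' = (∑ k', m k') - 1 := by
    have h1 : ∑ k', m' k' = (m k - 1) + ∑ x ∈ Finset.univ \ {k}, m x :=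
      Finset.sum_update_of_mem (Finset.mem_univ k) m (m k - 1)
    have h2 : ∑ k', m k' = m k + ∑ x ∈ Finset.univ \ {k}, m x := by
      have := Finset.sum_update_of_mem (Finset.mem_univ k) m (m k)
      simpa [Function.update_eq_self] using this
    omega
  -- the moment linear map
  let T : mixedF w1 n →ₗ[ℝ] ((Σ k' : Fin q, Fin (m' k')) → ℝ) :=
    { toFun := fun Q c => ∫ x, (Q : ℝ → ℝ) x * (x ^ (c.2 : ℕ) * w2 c.1 x)
      map_add' := by
        intro a b; funext c
        have hi1 := hIntF _ a.2 c.1 c.2 (lt_of_lt_of_le c.2.2 (hm'le c.1))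
        have hi2 := hIntF _ b.2 c.1 c.2 (lt_of_lt_of_le c.2.2 (hm'le c.1))
        have he : (fun x : ℝ => ((a + b : mixedF w1 n) : ℝ → ℝ) x * (x ^ (c.2 : ℕ) * w2 c.1 x))
            = fun x => (a : ℝ → ℝ) x * (x ^ (c.2 : ℕ) * w2 c.1 x)
              + (b : ℝ → ℝ) x * (x ^ (c.2 : ℕ) * w2 c.1 x) := by
          funext x; simp [add_mul]
        simp only [Pi.add_apply]
        rw [he, integral_add hi1 hi2]
      map_smul' := by
        intro c a; funext i
        have he : (fun x : ℝ => ((c • a : mixedF w1 n) : ℝ → ℝ) x * (x ^ (i.2 : ℕ) * w2 i.1 x))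
            = fun x => c * ((a : ℝ → ℝ) x * (x ^ (i.2 : ℕ) * w2 i.1 x)) := by
          funext x; simp [mul_assoc]
        simp only [RingHom.id_apply, Pi.smul_apply, smul_eq_mul]
        rw [he, integral_const_mul] }
  -- kernel of T is nontrivial
  have hker : LinearMap.ker T ≠ ⊥ := by
    intro hK
    have hinj : Function.Injective T := LinearMap.ker_eq_bot.mp hK
    have hle := LinearMap.finrank_le_finrank_of_injective hinj
    rw [hdim, Module.finrank_fintype_fun_eq_card] at hle
    have hcard : Fintype.card (Σ k' : Fin q, Fin (m' k')) = ∑ k', m' k' := by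
      simp [Fintype.card_sigma]
    rw [hcard, hsum'] at hle
    omega
  obtain ⟨x, hx, hx0⟩ := Submodule.exists_mem_ne_zero_of_ne_bot hker
  have hQ0G : (x : ℝ → ℝ) ∈ mixedGperp w2 m' := by
    intro k' j hj
    refine ⟨hIntF _ x.2 k' j (lt_of_lt_of_le hj (hm'le k')), ?_⟩
    have h := congrFun (LinearMap.mem_ker.mp hx) ⟨k', ⟨j, hj⟩⟩
    simpa [T] using h
  have hWmem : ((x : ℝ → ℝ)) ∈ mixedF w1 n ⊓ mixedGperp w2 m' := ⟨x.2, hQ0G⟩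
  have hxne : (x : ℝ → ℝ) ≠ 0 := fun h => hx0 (Subtype.ext h)
  -- the intersection is finite-dimensional
  haveI hWfd : FiniteDimensional ℝ (mixedF w1 n ⊓ mixedGperp w2 m' : Submodule ℝ (ℝ → ℝ)) :=
    Submodule.finiteDimensional_of_le inf_le_left
  -- upper bound via the injective functional
  let φ : (mixedF w1 n ⊓ mixedGperp w2 m' : Submodule ℝ (ℝ → ℝ)) →ₗ[ℝ] ℝ :=
    { toFun := fun Q => ∫ x, (Q : ℝ → ℝ) x * (x ^ (m k - 1) * w2 k x)
      map_add' := by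
        intro a b
        have hi1 := hIntF _ a.2.1 k (m k - 1) hmk1
        have hi2 := hIntF _ b.2.1 k (m k - 1) hmk1
        have he : (fun x : ℝ =>
            ((a + b : (mixedF w1 n ⊓ mixedGperp w2 m' : Submodule ℝ (ℝ → ℝ))) : ℝ → ℝ) x
              * (x ^ (m k - 1) * w2 k x))
            = fun x => (a : ℝ → ℝ) x * (x ^ (m k - 1) * w2 k x)
              + (b : ℝ → ℝ) x * (x ^ (m k - 1) * w2 k x) := by
          funext x; simp [add_mul]
        beta_reduce
        rw [he, integral_add hi1 hi2]
      map_smul' := by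
        intro c a
        have he : (fun x : ℝ =>
            ((c • a : (mixedF w1 n ⊓ mixedGperp w2 m' : Submodule ℝ (ℝ → ℝ))) : ℝ → ℝ) x
              * (x ^ (m k - 1) * w2 k x))
            = fun x => c * ((a : ℝ → ℝ) x * (x ^ (m k - 1) * w2 k x)) := by
          funext x; simp [mul_assoc]
        simp only [RingHom.id_apply, smul_eq_mul]
        beta_reduce
        rw [he, integral_const_mul] }
  have hφinj : Function.Injective φ := by
    rw [← LinearMap.ker_eq_bot, LinearMap.ker_eq_bot']
    intro Q hQ0
    exact Subtype.ext (hkey (Q : ℝ → ℝ) Q.2 hQ0)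
  have hub : Module.finrank ℝ
      (mixedF w1 n ⊓ mixedGperp w2 m' : Submodule ℝ (ℝ → ℝ)) ≤ 1 := by
    have := LinearMap.finrank_le_finrank_of_injective hφinj
    simpa using this
  have hlb : 1 ≤ Module.finrank ℝ
      (mixedF w1 n ⊓ mixedGperp w2 m' : Submodule ℝ (ℝ → ℝ)) := by
    rw [Nat.one_le_iff_ne_zero]
    intro h0
    have : Nontrivial (mixedF w1 n ⊓ mixedGperp w2 m' : Submodule ℝ (ℝ → ℝ)) :=
      nontrivial_of_ne ⟨_, hWmem⟩ 0 (by simpa [Submodule.mk_eq_zero] using hxne)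
    have := (Module.finrank_pos_iff (R := ℝ)).mpr this
    omega
  refine ⟨le_antisymm hub hlb, ?_⟩
  intro Q hQ hQne hzero
  exact hQne (hkey Q hQ hzero)
end
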